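/- Let T be a tree with diameter at least 3 such that γ_{t,coi}(T) = |V(T)| - β(T), and suppose some support vertex v of T is adjacent to at least two leaves. Let h be a leaf adjacent to v and T' = T - h. Then γ_{t,coi}(T') = |V(T')| - β(T') and β(T') = β(T) - 1. -/

import Mathlib

open scoped Classical

/-- A set `D` is a total co-independent dominating set of `G`:
it is a total dominating set and its complement is a nonempty independent set. -/
def TotalCoIndep {V : Type*} [Fintype V] (G : SimpleGraph V) (D : Finset V) : Prop :=
  (∀ v : V, ∃ u ∈ D, G.Adj v u) ∧
  (Dᶜ : Finset V).Nonempty ∧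
  ∀ u ∈ (Dᶜ : Finset V), ∀ w ∈ (Dᶜ : Finset V), ¬ G.Adj u w

/-- The total co-independent domination number. -/
noncomputable def gammaTcoi {V : Type*} [Fintype V] (G : SimpleGraph V) : ℕ :=
  sInf {k | ∃ D : Finset V, TotalCoIndep G D ∧ D.card = k}

/-- A finite set of vertices is independent. -/
def IsIndepF {V : Type*} (G : SimpleGraph V) (B : Finset V) : Prop :=
  ∀ u ∈ B, ∀ w ∈ B, ¬ G.Adj u w

/-- The independence number. -/
noncomputable def indepNum {V : Type*} [Fintype V] (G : SimpleGraph V) : ℕ :=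
  sSup {k | ∃ B : Finset V, IsIndepF G B ∧ B.card = k}

/-- A leaf: a vertex with exactly one neighbor (degree one). -/
def IsLeaf {V : Type*} (G : SimpleGraph V) (v : V) : Prop :=
  ∃! u, G.Adj v u

/-- The set of leaves. -/
noncomputable def leaves {V : Type*} [Fintype V] (G : SimpleGraph V) : Finset V :=
  Finset.univ.filter (fun v => IsLeaf G v)

/-- A support vertex: a non-leaf adjacent to a leaf. -/
def IsSupport {V : Type*} (G : SimpleGraph V) (v : V) : Prop :=
  ¬ IsLeaf G v ∧ ∃ u, G.Adj v u ∧ IsLeaf G u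

/-- A semi-support vertex: a non-leaf, non-support vertex adjacent to a support vertex. -/
def IsSemiSupport {V : Type*} (G : SimpleGraph V) (v : V) : Prop :=
  ¬ IsLeaf G v ∧ ¬ IsSupport G v ∧ ∃ u, G.Adj v u ∧ IsSupport G u

/-- An isolated support vertex: a support vertex with no support vertex as neighbor. -/
def IsIsolatedSupport {V : Type*} (G : SimpleGraph V) (v : V) : Prop :=
  IsSupport G v ∧ ∀ u, G.Adj v u → ¬ IsSupport G u

section Helpers
variable {V : Type*} [Fintype V] (G : SimpleGraph V)

lemma indep_bddAbove : BddAbove {k | ∃ B : Finset V, IsIndepF G B ∧ B.card = k} := by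
  refine ⟨Fintype.card V, ?_⟩
  rintro k ⟨B, -, rfl⟩
  exact B.card_le_univ

lemma card_le_indepNum {B : Finset V} (hB : IsIndepF G B) : B.card ≤ indepNum G :=
  le_csSup (indep_bddAbove G) ⟨B, hB, rfl⟩

lemma exists_indep_card : ∃ B : Finset V, IsIndepF G B ∧ B.card = indepNum G := by
  have hne : {k | ∃ B : Finset V, IsIndepF G B ∧ B.card = k}.Nonempty :=
    ⟨0, ∅, fun u hu => absurd hu (Finset.notMem_empty u), Finset.card_empty⟩
  exact Nat.sSup_mem hne (indep_bddAbove G)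

lemma tci_card_ge {D : Finset V} (hD : TotalCoIndep G D) :
    Fintype.card V - indepNum G ≤ D.card := by
  have h1 : Dᶜ.card ≤ indepNum G := card_le_indepNum G hD.2.2
  have h2 : Dᶜ.card = Fintype.card V - D.card := Finset.card_compl D
  have h3 : D.card ≤ Fintype.card V := D.card_le_univ
  omega

lemma gammaTcoi_le {D : Finset V} (hD : TotalCoIndep G D) : gammaTcoi G ≤ D.card :=
  Nat.sInf_le ⟨D, hD, rfl⟩

end Helpers

lemma mem_compl_any {α : Type*} [Fintype α] {i : DecidableEq α} {s : Finset α} {a : α} :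
    a ∈ sᶜ ↔ a ∉ s := Finset.mem_compl

lemma leaf_unique {V : Type*} (G : SimpleGraph V) {h v : V}
    (hleaf : IsLeaf G h) (hadj : G.Adj v h) : ∀ u, G.Adj h u → u = v := by
  obtain ⟨u0, hu0, huniq⟩ := hleaf
  have hv := huniq v hadj.symm
  intro u hu
  rw [huniq u hu, hv]


/-- Removing one of at least two leaves of a support vertex from a tree attaining
`γ_{t,coi} = n - β` yields a tree attaining the same equality, with independence number
dropping by exactly one. -/
theorem stmt15 {V : Type*} [Fintype V] (T : SimpleGraph V) (hT : T.IsTree)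
    (hdiam : ∃ x y : V, 3 ≤ T.dist x y)
    (hval : gammaTcoi T = Fintype.card V - indepNum T)
    (v h : V) (hsupp : IsSupport T v) (hleaf : IsLeaf T h) (hadj : T.Adj v h)
    (hother : ∃ h' : V, h' ≠ h ∧ T.Adj v h' ∧ IsLeaf T h') :
    gammaTcoi (T.induce {x : V | x ≠ h}) =
        Fintype.card {x : V | x ≠ h} - indepNum (T.induce {x : V | x ≠ h}) ∧
      indepNum (T.induce {x : V | x ≠ h}) = indepNum T - 1 := by
  obtain ⟨h', hh'h, hvh', hleaf'⟩ := hother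
  set n := Fintype.card V with hn
  set β := indepNum T with hβ
  set s : Set V := {x : V | x ≠ h} with hs
  set T' : SimpleGraph s := T.induce s with hT'
  have hvne : v ≠ h := hadj.ne
  have hh'v : h' ≠ v := hvh'.ne'
  have hu_h : ∀ u, T.Adj h u → u = v := leaf_unique T hleaf hadj
  have hu_h' : ∀ u, T.Adj h' u → u = v := leaf_unique T hleaf' hvh'
  have hnadj : ¬ T.Adj h h' := fun e => hh'v (hu_h h' e)
  -- β ≥ 2
  have hβ2 : 2 ≤ β := by
    have hind : IsIndepF T {h, h'} := by
      intro a ha b hb hab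
      simp only [Finset.mem_insert, Finset.mem_singleton] at ha hb
      rcases ha with rfl | rfl <;> rcases hb with rfl | rfl
      · exact hab.ne rfl
      · exact hnadj hab
      · exact hnadj hab.symm
      · exact hab.ne rfl
    have := card_le_indepNum T hind
    rwa [Finset.card_insert_of_notMem (by simpa using hh'h.symm), Finset.card_singleton] at this
  -- β < n
  have hβlt : β < n := by
    by_contra hc
    push_neg at hc
    obtain ⟨B, hBind, hBcard⟩ := exists_indep_card T
    have : B = Finset.univ := Finset.eq_univ_of_card B (le_antisymm B.card_le_univ (hBcard ▸ hc))
    exact hBind v (this ▸ Finset.mem_univ v) h (this ▸ Finset.mem_univ h) hadj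
  -- TCI family of T nonempty, minimum attained
  have hTne : {k | ∃ D : Finset V, TotalCoIndep T D ∧ D.card = k}.Nonempty := by
    by_contra hc
    rw [Set.not_nonempty_iff_eq_empty] at hc
    rw [gammaTcoi, hc, Nat.sInf_empty] at hval
    omega
  obtain ⟨D, hDtci, hDcard⟩ : ∃ D : Finset V, TotalCoIndep T D ∧ D.card = gammaTcoi T :=
    Nat.sInf_mem hTne
  have hvD : v ∈ D := by
    obtain ⟨u, huD, hu⟩ := hDtci.1 h
    rwa [hu_h u hu] at huD
  -- Step B: a minimum TCI set avoiding h
  have hD0ex : ∃ D0 : Finset V, TotalCoIndep T D0 ∧ D0.card = gammaTcoi T ∧ h ∉ D0 := by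
    by_cases hhD : h ∈ D
    · by_cases hh'D : h' ∈ D
      · exfalso
        have htci : TotalCoIndep T (D.erase h) := by
          refine ⟨?_, ?_, ?_⟩
          · intro x
            obtain ⟨u, huD, hxu⟩ := hDtci.1 x
            by_cases hu : u = h
            · subst hu
              have hx : x = v := hu_h x hxu.symm
              exact ⟨h', Finset.mem_erase.2 ⟨hh'h, hh'D⟩, hx ▸ hvh'⟩
            · exact ⟨u, Finset.mem_erase.2 ⟨hu, huD⟩, hxu⟩
          · exact ⟨h, Finset.mem_compl.2 (fun hc => (Finset.mem_erase.1 hc).1 rfl)⟩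
          · intro a ha b hb hab
            rw [Finset.mem_compl] at ha hb
            by_cases hah : a = h
            · subst hah
              have hbv : b = v := hu_h b hab
              exact hb (Finset.mem_erase.2 ⟨hbv ▸ hvne, hbv ▸ hvD⟩)
            · by_cases hbh : b = h
              · subst hbh
                have hav : a = v := hu_h a hab.symm
                exact ha (Finset.mem_erase.2 ⟨hav ▸ hvne, hav ▸ hvD⟩)
              · have haD : a ∉ D := fun hc => ha (Finset.mem_erase.2 ⟨hah, hc⟩)
                have hbD : b ∉ D := fun hc => hb (Finset.mem_erase.2 ⟨hbh, hc⟩)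
                exact hDtci.2.2 a (Finset.mem_compl.2 haD) b (Finset.mem_compl.2 hbD) hab
        have hle := gammaTcoi_le T htci
        have hcard := Finset.card_erase_of_mem hhD
        have hpos : 0 < D.card := Finset.card_pos.2 ⟨h, hhD⟩
        omega
      · refine ⟨insert h' (D.erase h), ⟨?_, ?_, ?_⟩, ?_, ?_⟩
        · intro x
          obtain ⟨u, huD, hxu⟩ := hDtci.1 x
          by_cases hu : u = h
          · subst hu
            have hx : x = v := hu_h x hxu.symm
            exact ⟨h', Finset.mem_insert_self _ _, hx ▸ hvh'⟩
          · exact ⟨u, Finset.mem_insert_of_mem (Finset.mem_erase.2 ⟨hu, huD⟩), hxu⟩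
        · refine ⟨h, Finset.mem_compl.2 ?_⟩
          intro hc
          rcases Finset.mem_insert.1 hc with e | e
          · exact hh'h e.symm
          · exact (Finset.mem_erase.1 e).1 rfl
        · intro a ha b hb hab
          rw [Finset.mem_compl] at ha hb
          have key : ∀ x, x ∉ insert h' (D.erase h) → x = h ∨ (x ∉ D ∧ x ≠ h') := by
            intro x hx
            by_cases hxh : x = h
            · exact Or.inl hxh
            · exact Or.inr ⟨fun hc => hx (Finset.mem_insert_of_mem
                (Finset.mem_erase.2 ⟨hxh, hc⟩)), fun hc => hx (hc ▸ Finset.mem_insert_self _ _)⟩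
          have hvmem : v ∈ insert h' (D.erase h) :=
            Finset.mem_insert_of_mem (Finset.mem_erase.2 ⟨hvne, hvD⟩)
          rcases key a ha with rfl | ⟨haD, _⟩
          · exact hb ((hu_h b hab) ▸ hvmem)
          · rcases key b hb with rfl | ⟨hbD, _⟩
            · exact ha ((hu_h a hab.symm) ▸ hvmem)
            · exact hDtci.2.2 a (Finset.mem_compl.2 haD) b (Finset.mem_compl.2 hbD) hab
        · have h1 : (insert h' (D.erase h)).card = (D.erase h).card + 1 :=
            Finset.card_insert_of_notMem (fun hc => hh'D (Finset.mem_erase.1 hc).2)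
          have h2 := Finset.card_erase_of_mem hhD
          have hpos : 0 < D.card := Finset.card_pos.2 ⟨h, hhD⟩
          omega
        · intro hc
          rcases Finset.mem_insert.1 hc with e | e
          · exact hh'h e.symm
          · exact (Finset.mem_erase.1 e).1 rfl
    · exact ⟨D, hDtci, hDcard, hhD⟩
  obtain ⟨D0, hD0tci, hD0card, hhD0⟩ := hD0ex
  have hvD0 : v ∈ D0 := by
    obtain ⟨u, huD, hu⟩ := hD0tci.1 h
    rwa [hu_h u hu] at huD
  -- Step C: independence numbers
  set β' := indepNum T' with hβ'
  have hβ'ge : β - 1 ≤ β' := by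
    obtain ⟨B, hBind, hBcard⟩ := exists_indep_card T
    set B1 := (B.erase h).subtype (fun x => x ∈ s) with hB1
    have hB1card : B1.card = (B.erase h).card := by
      rw [hB1, Finset.card_subtype, Finset.filter_true_of_mem]
      intro x hx
      exact (Finset.mem_erase.1 hx).1
    have hB1ind : IsIndepF T' B1 := by
      intro a ha b hb hab
      rw [hB1, Finset.mem_subtype] at ha hb
      have hab' : T.Adj ↑a ↑b := by rw [hT'] at hab; simpa using hab
      exact hBind ↑a (Finset.mem_of_mem_erase ha) ↑b (Finset.mem_of_mem_erase hb) hab'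
    have hle := card_le_indepNum T' hB1ind
    have h2 : B.card - 1 ≤ (B.erase h).card := by
      by_cases hB : h ∈ B
      · rw [Finset.card_erase_of_mem hB]
      · rw [Finset.erase_eq_of_notMem hB]; omega
    omega
  have hβ'le : β' + 1 ≤ β := by
    obtain ⟨B', hB'ind, hB'card⟩ := exists_indep_card T'
    set B2 := B'.map (Function.Embedding.subtype _) with hB2
    have hB2card : B2.card = β' := by rw [hB2, Finset.card_map, hB'card]
    have hB2h : h ∉ B2 := by
      intro hc
      rw [hB2, Finset.mem_map] at hc
      obtain ⟨a, _, hav⟩ := hc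
      exact a.2 (by simpa using hav)
    have hB2ind : IsIndepF T B2 := by
      intro a ha b hb hab
      rw [hB2, Finset.mem_map] at ha hb
      obtain ⟨a', ha', rfl⟩ := ha
      obtain ⟨b', hb', rfl⟩ := hb
      exact hB'ind a' ha' b' hb' (by rw [hT']; simpa using hab)
    by_cases hvB : v ∈ B2
    · have hh'B : h' ∉ B2 := fun hc => hB2ind v hvB h' hc hvh'
      have hCind : IsIndepF T (insert h (insert h' (B2.erase v))) := by
        intro a ha b hb hab
        simp only [Finset.mem_insert] at ha hb
        rcases ha with rfl | rfl | ha <;> rcases hb with rfl | rfl | hb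
        · exact hab.ne rfl
        · exact hnadj hab
        · exact (Finset.mem_erase.1 hb).1 (hu_h b hab)
        · exact hnadj hab.symm
        · exact hab.ne rfl
        · exact (Finset.mem_erase.1 hb).1 (hu_h' b hab)
        · exact (Finset.mem_erase.1 ha).1 (hu_h a hab.symm)
        · exact (Finset.mem_erase.1 ha).1 (hu_h' a hab.symm)
        · exact hB2ind a (Finset.mem_of_mem_erase ha) b (Finset.mem_of_mem_erase hb) hab
      have hCcard : (insert h (insert h' (B2.erase v))).card = β' + 1 := by
        have h1 : h ∉ insert h' (B2.erase v) := by
          simp only [Finset.mem_insert]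
          push_neg
          exact ⟨fun e => hh'h e.symm, fun hc => hB2h (Finset.mem_of_mem_erase hc)⟩
        have h2 : h' ∉ B2.erase v := fun hc => hh'B (Finset.mem_of_mem_erase hc)
        have h3 := Finset.card_erase_of_mem hvB
        have h4 : 0 < B2.card := Finset.card_pos.2 ⟨v, hvB⟩
        rw [Finset.card_insert_of_notMem h1, Finset.card_insert_of_notMem h2]
        omega
      have := card_le_indepNum T hCind
      omega
    · have hCind : IsIndepF T (insert h B2) := by
        intro a ha b hb hab
        simp only [Finset.mem_insert] at ha hb
        rcases ha with rfl | ha <;> rcases hb with rfl | hb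
        · exact hab.ne rfl
        · exact hvB ((hu_h b hab) ▸ hb)
        · exact hvB ((hu_h a hab.symm) ▸ ha)
        · exact hB2ind a ha b hb hab
      have hCcard : (insert h B2).card = β' + 1 := by
        rw [Finset.card_insert_of_notMem hB2h, hB2card]
      have := card_le_indepNum T hCind
      omega
  have hβ'eq : β' = β - 1 := by omega
  -- Step D: gamma of T'
  have hcards : Fintype.card s = n - 1 := by
    have h1 : Fintype.card {x : V | x ≠ h} = Fintype.card V - 1 := by simp [Finset.filter_ne', Finset.card_erase_of_mem]
    exact h1
  set D1 : Finset s := D0.subtype (fun x => x ∈ s) with hD1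
  have hD1card : D1.card = D0.card := by
    rw [hD1, Finset.card_subtype, Finset.filter_true_of_mem]
    intro x hx
    exact fun e => hhD0 (e ▸ hx)
  have hD1tci : TotalCoIndep T' D1 := by
    refine ⟨?_, ?_, ?_⟩
    · rintro ⟨x, hx⟩
      obtain ⟨u, huD, hxu⟩ := hD0tci.1 x
      have hu : u ∈ s := fun e => hhD0 (e ▸ huD)
      refine ⟨⟨u, hu⟩, ?_, ?_⟩
      · rw [hD1, Finset.mem_subtype]; exact huD
      · rw [hT']; simpa using hxu
    · have hc1 : D0ᶜ.card = β := by
        rw [Finset.card_compl]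
        omega
      obtain ⟨x, hx, hxh⟩ := Finset.exists_mem_ne (by omega : 1 < D0ᶜ.card) h
      refine ⟨⟨x, hxh⟩, mem_compl_any.2 ?_⟩
      rw [hD1, Finset.mem_subtype]
      exact Finset.mem_compl.1 hx
    · intro a ha b hb hab
      rw [mem_compl_any, hD1, Finset.mem_subtype] at ha hb
      exact hD0tci.2.2 ↑a (Finset.mem_compl.2 ha) ↑b (Finset.mem_compl.2 hb)
        (by rw [hT'] at hab; simpa using hab)
  have hγ'le : gammaTcoi T' ≤ n - β := by
    have := gammaTcoi_le T' hD1tci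
    omega
  have hT'ne : {k | ∃ Dd : Finset s, TotalCoIndep T' Dd ∧ Dd.card = k}.Nonempty :=
    ⟨D1.card, D1, hD1tci, rfl⟩
  obtain ⟨Dm, hDmtci, hDmcard⟩ : ∃ Dm : Finset s, TotalCoIndep T' Dm ∧ Dm.card = gammaTcoi T' :=
    Nat.sInf_mem hT'ne
  have hγ'ge := tci_card_ge T' hDmtci
  refine ⟨?_, hβ'eq⟩
  rw [hcards] at hγ'ge ⊢
  omega
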